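/- Let f : ℝ^d → ℝ be continuously differentiable with a nonempty set S of global minimizers, ∅ ≠ S̃ ⊆ S, P(·; S̃) nonnegative, and suppose there exist c₁ > 0, c₂ ≥ 0 with ⟨∇f(x), x − proj_{S̃}(x)⟩ ≥ c₁ P(x; S̃) − c₂ for all x. Assume further that ‖∇f(x)‖ ≤ G for all x ∈ ℝ^d. Let (x^k) be iterates x^{k+1} = x^k − γ^k ∇f(x^k) with γ^k = (2−α)(c₁ P(x^k; S̃) + β^k)/‖∇f(x^k)‖², where 0 < α < 2 and β^k > 0. Then for every K ≥ 0: min_{0≤k≤K} P(x^k; S̃) ≤ G ‖x^0 − x^0_p‖/(√((2−α)α) c₁ √(K+1)) + C^K, where C^K := (Σ_{k=0}^{K} (2−α) β^k γ^k)/(α c₁ Σ_{k=0}^{K} γ^k) + 2c₂/(α c₁) and x^0_p := proj_{S̃}(x^0). -/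

import Mathlib

open scoped RealInnerProductSpace

set_option maxHeartbeats 1600000 in
/-- Corollary 2: under the unified parametric assumption and bounded gradients,
gradient descent with the stepsize `γᵏ = (2−α)(c₁ P(xᵏ) + βᵏ)/‖∇f(xᵏ)‖²` achieves an
`O(1/√K)` rate for the progress function up to the neighborhood `Cᴷ`. -/
theorem bounded_gradient_rate
    {d : ℕ} (f : EuclideanSpace ℝ (Fin d) → ℝ)
    (hf : ContDiff ℝ 1 f)
    (S St : Set (EuclideanSpace ℝ (Fin d)))
    (hSne : S.Nonempty)
    (hSmin : ∀ s ∈ S, ∀ y, f s ≤ f y)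
    (hStS : St ⊆ S) (hStne : St.Nonempty)
    (proj : EuclideanSpace ℝ (Fin d) → EuclideanSpace ℝ (Fin d))
    (hproj : ∀ y, proj y ∈ St ∧ ∀ z ∈ St, ‖y - proj y‖ ≤ ‖y - z‖)
    (P : EuclideanSpace ℝ (Fin d) → ℝ) (hP : ∀ y, 0 ≤ P y)
    (c₁ c₂ : ℝ) (hc₁ : 0 < c₁) (hc₂ : 0 ≤ c₂)
    (hass : ∀ y, c₁ * P y - c₂ ≤ ⟪gradient f y, y - proj y⟫)
    (G : ℝ) (hG : ∀ y, ‖gradient f y‖ ≤ G)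
    (α : ℝ) (hα₁ : 0 < α) (hα₂ : α < 2)
    (β : ℕ → ℝ) (hβ : ∀ k, 0 < β k)
    (x : ℕ → EuclideanSpace ℝ (Fin d)) (γ : ℕ → ℝ)
    (hupd : ∀ k, x (k + 1) = x k - γ k • gradient f (x k))
    (hγ : ∀ k, γ k = (2 - α) * (c₁ * P (x k) + β k) / ‖gradient f (x k)‖ ^ 2)
    (K : ℕ) :
    (Finset.range (K + 1)).inf' Finset.nonempty_range_add_one (fun k => P (x k)) ≤
      G * ‖x 0 - proj (x 0)‖ / (Real.sqrt ((2 - α) * α) * c₁ * Real.sqrt (K + 1))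
      + ((∑ k ∈ Finset.range (K + 1), (2 - α) * β k * γ k) /
          (α * c₁ * ∑ k ∈ Finset.range (K + 1), γ k)
        + 2 * c₂ / (α * c₁)) := by
  have h2α : (0:ℝ) < 2 - α := by linarith
  set m : ℝ := (Finset.range (K + 1)).inf' Finset.nonempty_range_add_one (fun k => P (x k))
    with hmdef
  have hm_le : ∀ k ∈ Finset.range (K + 1), m ≤ P (x k) := by
    intro k hk
    exact Finset.inf'_le _ hk
  have hm_nonneg : 0 ≤ m := Finset.le_inf' _ _ (fun k _ => hP (x k))
  have hγnn : ∀ k, 0 ≤ γ k := by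
    intro k
    rw [hγ k]
    apply div_nonneg _ (by positivity)
    have h1 := hP (x k); have h2 := (hβ k).le
    exact mul_nonneg h2α.le (add_nonneg (mul_nonneg hc₁.le h1) h2)
  have hG0 : 0 ≤ G := le_trans (norm_nonneg _) (hG (x 0))
  have hsqrt1 : 0 < Real.sqrt ((2 - α) * α) := Real.sqrt_pos.mpr (by nlinarith)
  have hsqrtK : 0 < Real.sqrt ((K : ℝ) + 1) := Real.sqrt_pos.mpr (by positivity)
  set B : ℝ := G * ‖x 0 - proj (x 0)‖ / (Real.sqrt ((2 - α) * α) * c₁ * Real.sqrt (K + 1))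
    with hBdef
  set T : ℝ := ∑ k ∈ Finset.range (K + 1), (2 - α) * β k * γ k with hTdef
  set Ssum : ℝ := ∑ k ∈ Finset.range (K + 1), γ k with hSdef
  have hB0 : 0 ≤ B := by
    rw [hBdef]; positivity
  have hT0 : 0 ≤ T := by
    rw [hTdef]
    exact Finset.sum_nonneg fun k _ =>
      mul_nonneg (mul_nonneg h2α.le (hβ k).le) (hγnn k)
  have hS0 : 0 ≤ Ssum := by
    rw [hSdef]; exact Finset.sum_nonneg fun k _ => hγnn k
  set C : ℝ := T / (α * c₁ * Ssum) + 2 * c₂ / (α * c₁) with hCdef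
  have hC0 : 0 ≤ C := by
    rw [hCdef]
    apply add_nonneg
    · exact div_nonneg hT0 (mul_nonneg (by positivity) hS0)
    · positivity
  by_cases hz : ∀ k ∈ Finset.range (K + 1), gradient f (x k) ≠ 0
  · -- all gradients nonzero on the window
    have hGpos : 0 < G := by
      have h0 : gradient f (x 0) ≠ 0 := hz 0 (Finset.mem_range.mpr (by omega))
      exact lt_of_lt_of_le (norm_pos_iff.mpr h0) (hG (x 0))
    -- per-step descent inequality
    have key : ∀ k, gradient f (x k) ≠ 0 →
        ‖x (k + 1) - proj (x (k + 1))‖ ^ 2 ≤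
          ‖x k - proj (x k)‖ ^ 2 - α * c₁ * (γ k * P (x k)) + 2 * c₂ * γ k
            + (2 - α) * (β k * γ k) := by
      intro k hk
      have hgn : (0:ℝ) < ‖gradient f (x k)‖ ^ 2 := by
        have := norm_pos_iff.mpr hk; positivity
      have hγg : γ k * ‖gradient f (x k)‖ ^ 2 = (2 - α) * (c₁ * P (x k) + β k) := by
        rw [hγ k]; field_simp
      have h1 : ‖x (k + 1) - proj (x (k + 1))‖ ≤ ‖x (k + 1) - proj (x k)‖ :=
        (hproj (x (k + 1))).2 _ (hproj (x k)).1
      have h1' : ‖x (k + 1) - proj (x (k + 1))‖ ^ 2 ≤ ‖x (k + 1) - proj (x k)‖ ^ 2 :=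
        pow_le_pow_left₀ (norm_nonneg _) h1 2
      have hxe : x (k + 1) - proj (x k) = (x k - proj (x k)) - γ k • gradient f (x k) := by
        rw [hupd k, sub_right_comm]
      have hexp : ‖x (k + 1) - proj (x k)‖ ^ 2
          = ‖x k - proj (x k)‖ ^ 2
            - 2 * (γ k * ⟪gradient f (x k), x k - proj (x k)⟫)
            + γ k ^ 2 * ‖gradient f (x k)‖ ^ 2 := by
        rw [hxe, norm_sub_sq_real, real_inner_smul_right, norm_smul,
          Real.norm_eq_abs, mul_pow, sq_abs,
          real_inner_comm (x k - proj (x k)) (gradient f (x k))]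
      have hass' := hass (x k)
      have hγ0 := hγnn k
      have hmul : γ k * (c₁ * P (x k) - c₂) ≤
          γ k * ⟪gradient f (x k), x k - proj (x k)⟫ :=
        mul_le_mul_of_nonneg_left hass' hγ0
      have hγ2 : γ k ^ 2 * ‖gradient f (x k)‖ ^ 2
          = γ k * ((2 - α) * (c₁ * P (x k) + β k)) := by
        rw [← hγg]; ring
      rw [hexp] at h1'
      nlinarith [h1', hmul, hγ2]
    -- telescoped inequality
    have sum_ineq : ∀ n, n ≤ K + 1 →
        α * c₁ * ∑ k ∈ Finset.range n, γ k * P (x k) ≤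
          ‖x 0 - proj (x 0)‖ ^ 2 - ‖x n - proj (x n)‖ ^ 2
            + ∑ k ∈ Finset.range n, (2 * c₂ * γ k + (2 - α) * (β k * γ k)) := by
      intro n hn
      induction n with
      | zero => simp
      | succ n ih =>
        have ihn := ih (by omega)
        have hk := key n (hz n (Finset.mem_range.mpr (by omega)))
        rw [Finset.sum_range_succ, Finset.sum_range_succ]
        linarith [ihn, hk]
    have hsum := sum_ineq (K + 1) le_rfl
    have hrK : (0:ℝ) ≤ ‖x (K + 1) - proj (x (K + 1))‖ ^ 2 := by positivity
    have hsplit : ∑ k ∈ Finset.range (K + 1), (2 * c₂ * γ k + (2 - α) * (β k * γ k))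
        = 2 * c₂ * Ssum + T := by
      rw [hSdef, hTdef, Finset.mul_sum, ← Finset.sum_add_distrib]
      exact Finset.sum_congr rfl fun k _ => by ring
    have hsum2 : α * c₁ * ∑ k ∈ Finset.range (K + 1), γ k * P (x k) ≤
        ‖x 0 - proj (x 0)‖ ^ 2 + 2 * c₂ * Ssum + T := by
      rw [hsplit] at hsum; linarith
    have hγpos : ∀ k ∈ Finset.range (K + 1), 0 < γ k := by
      intro k hk
      rw [hγ k]
      have hgn : (0:ℝ) < ‖gradient f (x k)‖ ^ 2 := by
        have := norm_pos_iff.mpr (hz k hk); positivity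
      apply div_pos _ hgn
      exact mul_pos h2α (add_pos_of_nonneg_of_pos (mul_nonneg hc₁.le (hP (x k))) (hβ k))
    have hSpos : 0 < Ssum := by
      rw [hSdef]; exact Finset.sum_pos hγpos Finset.nonempty_range_add_one
    have h2 : m * Ssum ≤ ∑ k ∈ Finset.range (K + 1), γ k * P (x k) := by
      rw [hSdef, Finset.mul_sum]
      apply Finset.sum_le_sum
      intro k hk
      rw [mul_comm]
      exact mul_le_mul_of_nonneg_left (hm_le k hk) (hγnn k)
    have hSlow : ((K : ℝ) + 1) * ((2 - α) * (c₁ * m)) ≤ Ssum * G ^ 2 := by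
      have hterm : ∀ k ∈ Finset.range (K + 1), (2 - α) * (c₁ * m) ≤ γ k * G ^ 2 := by
        intro k hk
        have hγg : γ k * ‖gradient f (x k)‖ ^ 2 = (2 - α) * (c₁ * P (x k) + β k) := by
          rw [hγ k]
          have hgn : (0:ℝ) < ‖gradient f (x k)‖ ^ 2 := by
            have := norm_pos_iff.mpr (hz k hk); positivity
          field_simp [(norm_pos_iff.mpr (hz k hk)).ne']
        have hgG : ‖gradient f (x k)‖ ^ 2 ≤ G ^ 2 :=
          pow_le_pow_left₀ (norm_nonneg _) (hG (x k)) 2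
        have h := hm_le k hk
        have hb := hβ k
        have hγ0 := hγnn k
        have e1 : γ k * ‖gradient f (x k)‖ ^ 2 ≤ γ k * G ^ 2 :=
          mul_le_mul_of_nonneg_left hgG hγ0
        have e2 : c₁ * m ≤ c₁ * P (x k) + β k := by
          have := mul_le_mul_of_nonneg_left h hc₁.le
          linarith
        have e3 : (2 - α) * (c₁ * m) ≤ (2 - α) * (c₁ * P (x k) + β k) :=
          mul_le_mul_of_nonneg_left e2 h2α.le
        linarith [e1, e3, hγg]
      calc ((K : ℝ) + 1) * ((2 - α) * (c₁ * m))
          = ∑ _k ∈ Finset.range (K + 1), (2 - α) * (c₁ * m) := by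
            rw [Finset.sum_const, Finset.card_range]; push_cast; ring
        _ ≤ ∑ k ∈ Finset.range (K + 1), γ k * G ^ 2 := Finset.sum_le_sum hterm
        _ = Ssum * G ^ 2 := by rw [hSdef, Finset.sum_mul]
    set t : ℝ := m - C with htdef
    have hCmul : C * (α * c₁ * Ssum) = T + 2 * c₂ * Ssum := by
      rw [hCdef]
      field_simp
    have h3 : α * c₁ * (m * Ssum) ≤
        α * c₁ * ∑ k ∈ Finset.range (K + 1), γ k * P (x k) :=
      mul_le_mul_of_nonneg_left h2 (by positivity)
    have ht : t * (α * c₁ * Ssum) ≤ ‖x 0 - proj (x 0)‖ ^ 2 := by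
      have e1 : t * (α * c₁ * Ssum) = α * c₁ * (m * Ssum) - C * (α * c₁ * Ssum) := by
        rw [htdef]; ring
      rw [e1, hCmul]
      linarith
    rcases le_or_gt t 0 with htneg | htpos
    · -- m ≤ C already
      have : m ≤ C := by rw [htdef] at htneg; linarith
      linarith [hB0]
    · have hmpos : 0 < m := by
        have : t ≤ m := by rw [htdef]; linarith
        linarith
      have hD : (0:ℝ) < α * (2 - α) * c₁ ^ 2 * ((K : ℝ) + 1) := by
        apply mul_pos (mul_pos (mul_pos hα₁ h2α) (pow_pos hc₁ 2))
        positivity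
      have htm : t ^ 2 * (α * (2 - α) * c₁ ^ 2 * ((K : ℝ) + 1)) ≤
          ‖x 0 - proj (x 0)‖ ^ 2 * G ^ 2 := by
        have step1 : t * (α * c₁) * (((K : ℝ) + 1) * ((2 - α) * (c₁ * m))) ≤
            t * (α * c₁) * (Ssum * G ^ 2) :=
          mul_le_mul_of_nonneg_left hSlow (by positivity)
        have step2 : (t * (α * c₁ * Ssum)) * G ^ 2 ≤
            ‖x 0 - proj (x 0)‖ ^ 2 * G ^ 2 :=
          mul_le_mul_of_nonneg_right ht (sq_nonneg G)
        have step3 : t ^ 2 ≤ t * m := by nlinarith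
        nlinarith [step1, step2, step3, hD]
      have hB2 : B ^ 2 = ‖x 0 - proj (x 0)‖ ^ 2 * G ^ 2
          / (α * (2 - α) * c₁ ^ 2 * ((K : ℝ) + 1)) := by
        rw [hBdef, div_pow, mul_pow, mul_pow, mul_pow,
          Real.sq_sqrt (by nlinarith : (0:ℝ) ≤ (2 - α) * α),
          Real.sq_sqrt (by positivity : (0:ℝ) ≤ (K : ℝ) + 1)]
        ring
      have ht2 : t ^ 2 ≤ B ^ 2 := by
        rw [hB2, le_div_iff₀ hD]
        exact htm
      have htB : t ≤ B := by
        have h := Real.sqrt_le_sqrt ht2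
        rwa [Real.sqrt_sq htpos.le, Real.sqrt_sq hB0] at h
      rw [htdef] at htB
      linarith
  · -- some gradient vanishes: then P there is ≤ c₂/c₁
    push_neg at hz
    obtain ⟨k, hk, hk0⟩ := hz
    have h1 : c₁ * P (x k) - c₂ ≤ 0 := by
      have h := hass (x k)
      rw [hk0, inner_zero_left] at h
      exact h
    have h2 : m * (α * c₁) ≤ 2 * c₂ := by
      have hmp := hm_le k hk
      nlinarith [mul_le_mul_of_nonneg_left hmp hc₁.le,
        mul_nonneg (mul_nonneg hm_nonneg hc₁.le) h2α.le]
    have h3 : m ≤ 2 * c₂ / (α * c₁) := (le_div_iff₀ (by positivity)).mpr h2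
    have h4 : 0 ≤ T / (α * c₁ * Ssum) :=
      div_nonneg hT0 (mul_nonneg (by positivity) hS0)
    have h5 : m ≤ C := by rw [hCdef]; linarith
    linarith [hB0, h5]
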